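/- Let n ≥ 1, let L₂, …, Lₙ be Kripke complete monomodal logics, and let L = K × L₂ × … × Lₙ, where K is the logic of the class of all 1-frames. Fix an n-modal formula φ whose variables are among p₁, …, p_m and let A and σ be the formula and translation defined from φ. Then φ ∈ L if and only if A → σ(φ) ∈ L; consequently K × L₂ × … × Lₙ is exponentially embeddable into its one-variable fragment. (Remark in Section 4: the analogue of Theorem 3.3 for K in place of T) -/

import Mathlib

namespace ModalProducts

/-- `N`-modal formulas over propositional variables indexed by `ℕ`
(the variable `pₖ` is `var k`; the extra variable `p` is `var 0`). -/
inductive MF (N : ℕ) : Type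
  | var : ℕ → MF N
  | bot : MF N
  | and : MF N → MF N → MF N
  | or  : MF N → MF N → MF N
  | imp : MF N → MF N → MF N
  | box : Fin N → MF N → MF N
deriving DecidableEq

namespace MF

variable {N : ℕ}

/-- negation: `¬ψ = ψ → ⊥`. -/
def neg (φ : MF N) : MF N := imp φ bot

/-- diamond: `◇ᵢψ = ¬□ᵢ¬ψ`. -/
def dia (i : Fin N) (φ : MF N) : MF N := neg (box i (neg φ))

/-- modal depth. -/
def md : MF N → ℕ
  | var _ => 0
  | bot => 0
  | and φ ψ => max (md φ) (md ψ)
  | or φ ψ => max (md φ) (md ψ)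
  | imp φ ψ => max (md φ) (md ψ)
  | box _ φ => md φ + 1

/-- length (number of symbols; the variable `pₖ` counts as `k+1` symbols,
accounting for the subscript). -/
def len : MF N → ℕ
  | var q => q + 1
  | bot => 1
  | and φ ψ => len φ + len ψ + 1
  | or φ ψ => len φ + len ψ + 1
  | imp φ ψ => len φ + len ψ + 1
  | box _ φ => len φ + 1

/-- the set of propositional variables occurring in a formula. -/
def vars : MF N → Set ℕ
  | var q => {q}
  | bot => ∅
  | and φ ψ => vars φ ∪ vars ψ
  | or φ ψ => vars φ ∪ vars ψ
  | imp φ ψ => vars φ ∪ vars ψ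
  | box _ φ => vars φ

/-- the largest index of a variable occurring in a formula (0 if none). -/
def maxVar : MF N → ℕ
  | var q => q
  | bot => 0
  | and φ ψ => max (maxVar φ) (maxVar ψ)
  | or φ ψ => max (maxVar φ) (maxVar ψ)
  | imp φ ψ => max (maxVar φ) (maxVar ψ)
  | box _ φ => maxVar φ

/-- the list of subformulas of a formula. -/
def subfs : MF N → List (MF N)
  | var q => [var q]
  | bot => [bot]
  | and φ ψ => and φ ψ :: (subfs φ ++ subfs ψ)
  | or φ ψ => or φ ψ :: (subfs φ ++ subfs ψ)
  | imp φ ψ => imp φ ψ :: (subfs φ ++ subfs ψ)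
  | box i φ => box i φ :: subfs φ

/-- uniform substitution of formulas for variables. -/
def subst (s : ℕ → MF N) : MF N → MF N
  | var q => s q
  | bot => bot
  | and φ ψ => and (subst s φ) (subst s ψ)
  | or φ ψ => or (subst s φ) (subst s ψ)
  | imp φ ψ => imp (subst s φ) (subst s ψ)
  | box i φ => box i (subst s φ)

end MF

/-- `θ` is a subformula of `φ`. -/
def Subformula {N : ℕ} (θ φ : MF N) : Prop := θ ∈ φ.subfs

/-- A Kripke `N`-frame: a nonempty set of points with `N` accessibility relations. -/
structure Frame (N : ℕ) where
  W : Type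
  nonempty : Nonempty W
  R : Fin N → W → W → Prop

/-- Truth of a formula at a point of a frame under a valuation. -/
def Sat {N : ℕ} (F : Frame N) (v : ℕ → Set F.W) : F.W → MF N → Prop
  | x, .var q => x ∈ v q
  | _, .bot => False
  | x, .and φ ψ => Sat F v x φ ∧ Sat F v x ψ
  | x, .or φ ψ => Sat F v x φ ∨ Sat F v x ψ
  | x, .imp φ ψ => Sat F v x φ → Sat F v x ψ
  | x, .box i φ => ∀ y, F.R i x y → Sat F v y φ

/-- Validity of a formula in a frame: truth at every point under every valuation. -/
def Valid {N : ℕ} (F : Frame N) (φ : MF N) : Prop := ∀ (v : ℕ → Set F.W) (x : F.W), Sat F v x φ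

/-- A set of formulas is valid in a frame if all of its members are. -/
def ValidSet {N : ℕ} (F : Frame N) (L : Set (MF N)) : Prop := ∀ φ ∈ L, Valid F φ

/-- The logic of a class of frames. -/
def Logic {N : ℕ} (C : Set (Frame N)) : Set (MF N) := {φ | ∀ F ∈ C, Valid F φ}

/-- A logic is Kripke complete if it is the logic of some nonempty class of frames. -/
def KripkeComplete {N : ℕ} (L : Set (MF N)) : Prop :=
  ∃ C : Set (Frame N), C.Nonempty ∧ L = Logic C

/-- The product of `N` 1-frames. -/
def prodFrame {N : ℕ} (Fs : Fin N → Frame 1) : Frame N where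
  W := ∀ i, (Fs i).W
  nonempty := ⟨fun i => (Fs i).nonempty.some⟩
  R := fun i x y => (Fs i).R 0 (x i) (y i) ∧ ∀ k, k ≠ i → x k = y k

/-- The product of `N` Kripke complete monomodal logics: the logic of the class of
products of frames of the factors. -/
def productLogic {N : ℕ} (Ls : Fin N → Set (MF 1)) : Set (MF N) :=
  Logic {F | ∃ Fs : Fin N → Frame 1, (∀ i, ValidSet (Fs i) (Ls i)) ∧ F = prodFrame Fs}

/-- A 1-frame is reflexive. -/
def ReflexiveFrame (F : Frame 1) : Prop := ∀ x, F.R 0 x x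

/-- The logic `T` of all reflexive 1-frames. -/
def logicT : Set (MF 1) := Logic {F | ReflexiveFrame F}

/-- The logic `K` of all 1-frames. -/
def logicK : Set (MF 1) := Logic Set.univ

/-- The logic `S5` of all 1-frames whose relation is an equivalence. -/
def logicS5 : Set (MF 1) := Logic {F | Equivalence (F.R 0)}

section Translation

variable {n : ℕ}

/-- the variable `p`. -/
def pv : MF (n+1) := .var 0

/-- `◆₁ψ = ◇₁(¬p ∧ ◇₁(p ∧ ψ))`. -/
def blackDia (ψ : MF (n+1)) : MF (n+1) :=
  MF.dia 0 (.and (MF.neg pv) (MF.dia 0 (.and pv ψ)))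

/-- `α_k = ◆₁ᵏ □₁ p`. -/
def alphaF (k : ℕ) : MF (n+1) := blackDia^[k] (.box 0 pv)

/-- `β_k = ¬p ∧ ◇₁(p ∧ α_k)`. -/
def betaF (k : ℕ) : MF (n+1) := .and (MF.neg pv) (MF.dia 0 (.and pv (alphaF k)))

/-- `B = β_{m+1}`. -/
def Bf (m : ℕ) : MF (n+1) := betaF (m+1)

/-- The translation `σ`: `σ(p_k) = β_k`, `σ(⊥) = ⊥`, `σ` commutes with `∧, ∨, →`,
and `σ(□ᵢψ) = □ᵢ(B → σ(ψ))`. -/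
def sigmaT (m : ℕ) : MF (n+1) → MF (n+1)
  | .var k => betaF k
  | .bot => .bot
  | .and φ ψ => .and (sigmaT m φ) (sigmaT m ψ)
  | .or φ ψ => .or (sigmaT m φ) (sigmaT m ψ)
  | .imp φ ψ => .imp (sigmaT m φ) (sigmaT m ψ)
  | .box i φ => .box i (.imp (Bf m) (sigmaT m φ))

/-- conjunction of a head formula with a list of formulas. -/
def bigAnd (ψ : MF (n+1)) (l : List (MF (n+1))) : MF (n+1) := l.foldl .and ψ

/-- `□^{≤k}`: `□^{≤0}ψ = ψ`, `□^{≤k+1}ψ = □^{≤k}ψ ∧ □₁□^{≤k}ψ ∧ … ∧ □ₙ□^{≤k}ψ`. -/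
def boxLe : ℕ → MF (n+1) → MF (n+1)
  | 0, ψ => ψ
  | k+1, ψ => bigAnd (boxLe k ψ) (List.ofFn fun i : Fin (n+1) => .box i (boxLe k ψ))

/-- `□₋₁^{≤k}`: like `□^{≤k}` but using only `□₂, …, □ₙ`. -/
def boxLeTail : ℕ → MF (n+1) → MF (n+1)
  | 0, ψ => ψ
  | k+1, ψ => bigAnd (boxLeTail k ψ) (List.ofFn fun i : Fin n => .box i.succ (boxLeTail k ψ))

/-- `◇₋₁^{≤k}ψ = ¬□₋₁^{≤k}¬ψ`. -/
def diaLeTail (k : ℕ) (ψ : MF (n+1)) : MF (n+1) := MF.neg (boxLeTail k (MF.neg ψ))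

/-- `A = B ∧ □^{≤md φ}(B → □₋₁^{≤md φ}B) ∧ □^{≤md φ}(◇₋₁^{≤md φ}B → B)`. -/
def Af (m : ℕ) (φ : MF (n+1)) : MF (n+1) :=
  .and (Bf m)
    (.and (boxLe φ.md (.imp (Bf m) (boxLeTail φ.md (Bf m))))
          (boxLe φ.md (.imp (diaLeTail φ.md (Bf m)) (Bf m))))

end Translation

end ModalProducts

open ModalProducts
namespace ModalProducts
open MF

lemma sat_neg {N} (F : Frame N) (v : ℕ → Set F.W) (x φ) :
    Sat F v x (MF.neg φ) ↔ ¬ Sat F v x φ := by simp [MF.neg, Sat]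

lemma sat_dia {N} (F : Frame N) (v : ℕ → Set F.W) (x i φ) :
    Sat F v x (MF.dia i φ) ↔ ∃ y, F.R i x y ∧ Sat F v y φ := by
  simp [MF.dia, MF.neg, Sat]

/-- reachability in at most `k` steps. -/
def ReachLe {N} (F : Frame N) : ℕ → F.W → F.W → Prop
  | 0, z, z' => z' = z
  | k+1, z, z' => ReachLe F k z z' ∨ ∃ i z₁, F.R i z z₁ ∧ ReachLe F k z₁ z'

/-- reachability using only the non-first relations. -/
def TReachLe {n} (F : Frame (n+1)) : ℕ → F.W → F.W → Prop
  | 0, z, z' => z' = z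
  | k+1, z, z' => TReachLe F k z z' ∨ ∃ i : Fin n, ∃ z₁, F.R i.succ z z₁ ∧ TReachLe F k z₁ z'

lemma ReachLe.refl {N} (F : Frame N) (k) (z : F.W) : ReachLe F k z z := by
  cases k with
  | zero => rfl
  | succ k => exact Or.inl (ReachLe.refl F k z)

lemma TReachLe.refl {n} (F : Frame (n+1)) (k) (z : F.W) : TReachLe F k z z := by
  cases k with
  | zero => rfl
  | succ k => exact Or.inl (TReachLe.refl F k z)

lemma ReachLe.succ_of {N} (F : Frame N) {k} {z z' : F.W} (h : ReachLe F k z z') :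
    ReachLe F (k+1) z z' := Or.inl h

lemma ReachLe.mono {N} (F : Frame N) {k k'} (hk : k ≤ k') {z z' : F.W}
    (h : ReachLe F k z z') : ReachLe F k' z z' := by
  induction hk with
  | refl => exact h
  | step _ ih => exact Or.inl ih

lemma TReachLe.mono {n} (F : Frame (n+1)) {k k'} (hk : k ≤ k') {z z' : F.W}
    (h : TReachLe F k z z') : TReachLe F k' z z' := by
  induction hk with
  | refl => exact h
  | step _ ih => exact Or.inl ih

lemma TReachLe.append {n} {F : Frame (n+1)} {k} {a b c : F.W}
    (h : TReachLe F k a b) (i : Fin n) (hs : F.R i.succ b c) : TReachLe F (k+1) a c := by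
  induction k generalizing a with
  | zero => cases h; exact Or.inr ⟨i, c, hs, rfl⟩
  | succ k ih =>
    rcases h with h | ⟨j, z₁, hst, h⟩
    · exact Or.inl (ih h)
    · exact Or.inr ⟨j, z₁, hst, ih h⟩

lemma sat_bigAnd {n} (F : Frame (n+1)) (v : ℕ → Set F.W) (x) (ψ : MF (n+1)) (l) :
    Sat F v x (bigAnd ψ l) ↔ Sat F v x ψ ∧ ∀ χ ∈ l, Sat F v x χ := by
  induction l generalizing ψ with
  | nil => simp [bigAnd]
  | cons χ l ih =>
    show Sat F v x (bigAnd (ψ.and χ) l) ↔ _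
    rw [ih]
    simp only [Sat, List.mem_cons]
    constructor
    · rintro ⟨⟨h1, h2⟩, h3⟩
      exact ⟨h1, fun χ' hχ' => by rcases hχ' with rfl | hχ'; exact h2; exact h3 _ hχ'⟩
    · rintro ⟨h1, h3⟩
      exact ⟨⟨h1, h3 _ (Or.inl rfl)⟩, fun χ' hχ' => h3 _ (Or.inr hχ')⟩

lemma sat_boxLe {n} (F : Frame (n+1)) (v : ℕ → Set F.W) (k : ℕ) (ψ : MF (n+1)) (x) :
    Sat F v x (boxLe k ψ) ↔ ∀ z, ReachLe F k x z → Sat F v z ψ := by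
  induction k generalizing x with
  | zero =>
    constructor
    · rintro h z rfl; exact h
    · intro h; exact h x rfl
  | succ k ih =>
    show Sat F v x (bigAnd _ _) ↔ _
    rw [sat_bigAnd]
    simp only [List.mem_ofFn]
    constructor
    · rintro ⟨h1, h2⟩ z (hz | ⟨i, z₁, hst, hz⟩)
      · exact (ih x).1 h1 z hz
      · rcases (h2 _ ⟨i, rfl⟩ : Sat F v x (MF.box i (boxLe k ψ))) with h
        exact (ih z₁).1 (h z₁ hst) z hz
    · intro h
      refine ⟨(ih x).2 fun z hz => h z (Or.inl hz), ?_⟩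
      rintro χ ⟨i, rfl⟩
      intro z₁ hst
      exact (ih z₁).2 fun z hz => h z (Or.inr ⟨i, z₁, hst, hz⟩)

lemma sat_boxLeTail {n} (F : Frame (n+1)) (v : ℕ → Set F.W) (k : ℕ) (ψ : MF (n+1)) (x) :
    Sat F v x (boxLeTail k ψ) ↔ ∀ z, TReachLe F k x z → Sat F v z ψ := by
  induction k generalizing x with
  | zero =>
    constructor
    · rintro h z rfl; exact h
    · intro h; exact h x rfl
  | succ k ih =>
    show Sat F v x (bigAnd _ _) ↔ _
    rw [sat_bigAnd]
    simp only [List.mem_ofFn]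
    constructor
    · rintro ⟨h1, h2⟩ z (hz | ⟨i, z₁, hst, hz⟩)
      · exact (ih x).1 h1 z hz
      · rcases (h2 _ ⟨i, rfl⟩ : Sat F v x (MF.box i.succ (boxLeTail k ψ))) with h
        exact (ih z₁).1 (h z₁ hst) z hz
    · intro h
      refine ⟨(ih x).2 fun z hz => h z (Or.inl hz), ?_⟩
      rintro χ ⟨i, rfl⟩
      intro z₁ hst
      exact (ih z₁).2 fun z hz => h z (Or.inr ⟨i, z₁, hst, hz⟩)

lemma sat_diaLeTail {n} (F : Frame (n+1)) (v : ℕ → Set F.W) (k : ℕ) (ψ : MF (n+1)) (x) :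
    Sat F v x (diaLeTail k ψ) ↔ ∃ z, TReachLe F k x z ∧ Sat F v z ψ := by
  rw [diaLeTail, sat_neg, sat_boxLeTail]
  push_neg
  constructor
  · rintro ⟨z, hz, h⟩; exact ⟨z, hz, by rwa [sat_neg, not_not] at h⟩
  · rintro ⟨z, hz, h⟩; exact ⟨z, hz, by rw [sat_neg]; exact not_not_intro h⟩

/-- tail-reachability in a product frame preserves the first coordinate. -/
lemma treach_fst {n} (Fs : Fin (n+1) → Frame 1) {k} {a b : (prodFrame Fs).W}
    (h : TReachLe (prodFrame Fs) k a b) : b 0 = a 0 := by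
  induction k generalizing a with
  | zero => cases h; rfl
  | succ k ih =>
    rcases h with h | ⟨i, z₁, hst, h⟩
    · exact ih h
    · rw [ih h, (hst.2 0 (Fin.succ_ne_zero i).symm)]
end ModalProducts
namespace ModalProducts
open MF

variable {n : ℕ}

lemma alphaF_succ (k : ℕ) : (alphaF (k+1) : MF (n+1)) = blackDia (alphaF k) := by
  rw [alphaF, Function.iterate_succ_apply', alphaF]

lemma len_alphaF (k : ℕ) : (alphaF k : MF (n+1)).len = 16*k + 2 := by
  induction k with
  | zero => rfl
  | succ k ih =>
    rw [alphaF_succ]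
    simp only [blackDia, MF.dia, MF.neg, MF.len, pv, ih]
    ring

lemma len_betaF (k : ℕ) : (betaF k : MF (n+1)).len = 16*k + 13 := by
  simp only [betaF, MF.dia, MF.neg, MF.len, pv, len_alphaF]
  ring

lemma len_Bf (m : ℕ) : (Bf m : MF (n+1)).len = 16*m + 29 := by
  rw [Bf, len_betaF]; ring

lemma len_bigAnd (ψ : MF (n+1)) (l) :
    (bigAnd ψ l).len = ψ.len + (l.map (fun χ => MF.len χ + 1)).sum := by
  induction l generalizing ψ with
  | nil => simp [bigAnd]
  | cons χ l ih =>
    show (bigAnd (ψ.and χ) l).len = _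
    rw [ih]
    simp [MF.len]
    ring

lemma len_boxLe (k : ℕ) (ψ : MF (n+1)) :
    (boxLe k ψ).len + 2 = (n+2)^k * (ψ.len + 2) := by
  induction k with
  | zero => simp [boxLe]
  | succ k ih =>
    rw [boxLe, len_bigAnd, List.map_ofFn]
    rw [List.sum_ofFn]
    simp only [Function.comp, MF.len]
    rw [Finset.sum_const, Finset.card_univ, Fintype.card_fin, smul_eq_mul]
    rw [pow_succ, mul_right_comm, ← ih]
    ring

lemma len_boxLeTail (k : ℕ) (ψ : MF (n+1)) :
    (boxLeTail k ψ).len + 2 = (n+1)^k * (ψ.len + 2) := by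
  induction k with
  | zero => simp [boxLeTail]
  | succ k ih =>
    rw [boxLeTail, len_bigAnd, List.map_ofFn]
    rw [List.sum_ofFn]
    simp only [Function.comp, MF.len]
    rw [Finset.sum_const, Finset.card_univ, Fintype.card_fin, smul_eq_mul]
    rw [pow_succ, mul_right_comm, ← ih]
    ring

lemma len_sigmaT (m : ℕ) (ψ : MF (n+1)) (h : ∀ q ∈ ψ.vars, q ≤ m) :
    (sigmaT m ψ).len ≤ (16*m + 33) * ψ.len := by
  induction ψ with
  | var q =>
    have : q ≤ m := h q (by simp [MF.vars])
    simp only [sigmaT, len_betaF, MF.len, len_alphaF]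
    nlinarith
  | bot => simp only [sigmaT, MF.len]; nlinarith
  | and φ ψ ihφ ihψ =>
    have h1 := ihφ fun q hq => h q (Or.inl hq)
    have h2 := ihψ fun q hq => h q (Or.inr hq)
    simp only [sigmaT, MF.len] at *
    nlinarith
  | or φ ψ ihφ ihψ =>
    have h1 := ihφ fun q hq => h q (Or.inl hq)
    have h2 := ihψ fun q hq => h q (Or.inr hq)
    simp only [sigmaT, MF.len] at *
    nlinarith
  | imp φ ψ ihφ ihψ =>
    have h1 := ihφ fun q hq => h q (Or.inl hq)
    have h2 := ihψ fun q hq => h q (Or.inr hq)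
    simp only [sigmaT, MF.len] at *
    nlinarith
  | box i φ ihφ =>
    have h1 := ihφ fun q hq => h q hq
    simp only [sigmaT, MF.len, len_Bf, len_alphaF, len_betaF] at *
    nlinarith

lemma md_le_len (φ : MF (n+1)) : φ.md ≤ φ.len := by
  induction φ <;> simp [MF.md, MF.len] at * <;> omega

lemma maxVar_le_len (φ : MF (n+1)) : φ.maxVar ≤ φ.len := by
  induction φ <;> simp [MF.maxVar, MF.len] at * <;> omega

lemma len_pos (φ : MF (n+1)) : 1 ≤ φ.len := by
  induction φ <;> simp [MF.len] at * <;> omega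

lemma mem_vars_le_maxVar {φ : MF (n+1)} {q : ℕ} (h : q ∈ φ.vars) : q ≤ φ.maxVar := by
  induction φ with
  | var p => simp [MF.vars] at h; simp [MF.maxVar, h]
  | bot => simp [MF.vars] at h
  | and φ ψ ihφ ihψ =>
    rcases h with h | h
    · exact le_trans (ihφ h) (le_max_left _ _)
    · exact le_trans (ihψ h) (le_max_right _ _)
  | or φ ψ ihφ ihψ =>
    rcases h with h | h
    · exact le_trans (ihφ h) (le_max_left _ _)
    · exact le_trans (ihψ h) (le_max_right _ _)
  | imp φ ψ ihφ ihψ =>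
    rcases h with h | h
    · exact le_trans (ihφ h) (le_max_left _ _)
    · exact le_trans (ihψ h) (le_max_right _ _)
  | box i φ ihφ => exact ihφ h

lemma vars_blackDia (x : MF (n+1)) : (blackDia x).vars ⊆ x.vars ∪ {0} := by
  simp only [blackDia, MF.dia, MF.neg, MF.vars, pv]
  intro q hq
  simp only [Set.mem_union, Set.mem_singleton_iff, Set.mem_empty_iff_false, or_false,
    false_or] at hq ⊢
  tauto

lemma vars_alphaF (k : ℕ) : (alphaF k : MF (n+1)).vars ⊆ {0} := by
  induction k with
  | zero => simp [alphaF, MF.vars, pv]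
  | succ k ih =>
    intro q hq
    rw [alphaF_succ] at hq
    rcases (vars_blackDia _ hq) with h | h
    · exact ih h
    · exact h

lemma vars_betaF (k : ℕ) : (betaF k : MF (n+1)).vars ⊆ {0} := by
  simp only [betaF, MF.dia, MF.neg, MF.vars, pv]
  intro q hq
  have ha : q ∈ (alphaF k : MF (n+1)).vars → q = 0 := fun h => vars_alphaF k h
  simp only [Set.mem_union, Set.mem_singleton_iff, Set.mem_empty_iff_false, or_false,
    false_or] at hq ⊢
  tauto

lemma vars_Bf (m : ℕ) : (Bf m : MF (n+1)).vars ⊆ {0} := vars_betaF _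

lemma vars_sigmaT (m : ℕ) (ψ : MF (n+1)) : (sigmaT m ψ).vars ⊆ {0} := by
  induction ψ with
  | var q => exact vars_betaF q
  | bot => simp [sigmaT, MF.vars]
  | and φ ψ ihφ ihψ => exact Set.union_subset ihφ ihψ
  | or φ ψ ihφ ihψ => exact Set.union_subset ihφ ihψ
  | imp φ ψ ihφ ihψ => exact Set.union_subset ihφ ihψ
  | box i φ ihφ => exact Set.union_subset (vars_Bf m) ihφ

lemma vars_bigAnd (ψ : MF (n+1)) (l) (hψ : ψ.vars ⊆ {0}) (hl : ∀ χ ∈ l, MF.vars χ ⊆ {0}) :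
    (bigAnd ψ l).vars ⊆ {0} := by
  induction l generalizing ψ with
  | nil => exact hψ
  | cons χ l ih =>
    exact ih _ (Set.union_subset hψ (hl _ List.mem_cons_self))
      fun χ' h => hl _ (List.mem_cons_of_mem _ h)

lemma vars_boxLe (k : ℕ) (ψ : MF (n+1)) (hψ : ψ.vars ⊆ {0}) : (boxLe k ψ).vars ⊆ {0} := by
  induction k with
  | zero => exact hψ
  | succ k ih =>
    refine vars_bigAnd _ _ ih ?_
    intro χ hχ
    rw [List.mem_ofFn] at hχ
    rcases hχ with ⟨i, rfl⟩
    exact ih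

lemma vars_boxLeTail (k : ℕ) (ψ : MF (n+1)) (hψ : ψ.vars ⊆ {0}) :
    (boxLeTail k ψ).vars ⊆ {0} := by
  induction k with
  | zero => exact hψ
  | succ k ih =>
    refine vars_bigAnd _ _ ih ?_
    intro χ hχ
    rw [List.mem_ofFn] at hχ
    rcases hχ with ⟨i, rfl⟩
    exact ih

lemma vars_Af (m : ℕ) (φ : MF (n+1)) : (Af m φ).vars ⊆ {0} := by
  refine Set.union_subset (vars_Bf m) (Set.union_subset ?_ ?_)
  · exact vars_boxLe _ _ (Set.union_subset (vars_Bf m) (vars_boxLeTail _ _ (vars_Bf m)))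
  · refine vars_boxLe _ _ (Set.union_subset ?_ (vars_Bf m))
    simp only [diaLeTail, MF.neg, MF.vars]
    exact Set.union_subset (vars_boxLeTail _ _
      (Set.union_subset (vars_Bf m) (by simp [MF.vars]))) (by simp [MF.vars])

end ModalProducts
namespace ModalProducts
open MF

variable {n : ℕ}

/-- gadget step relation on codes. -/
def gstep (m : ℕ) (c c' : ℕ × ℕ) : Prop :=
  (c = (0,0) ∧ c' = (0,1)) ∨
  (c = (0,1) ∧ 1 ≤ c'.1 ∧ c'.1 ≤ m+1 ∧ c'.2 = 1) ∨
  (1 ≤ c.1 ∧ c.1 ≤ m+1 ∧ 1 ≤ c.2 ∧ c.2 < 2*c.1 ∧ c' = (c.1, c.2+1))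

lemma gstep_orig_iff (m : ℕ) (c' : ℕ × ℕ) : gstep m (0,0) c' ↔ c' = (0,1) := by
  unfold gstep
  constructor
  · rintro (⟨_, h⟩ | ⟨h, _⟩ | ⟨h, _⟩)
    · exact h
    · exact absurd h (by decide)
    · exact absurd h (by decide)
  · intro h; exact Or.inl ⟨rfl, h⟩

lemma gstep_twin_iff (m : ℕ) (c' : ℕ × ℕ) :
    gstep m (0,1) c' ↔ (1 ≤ c'.1 ∧ c'.1 ≤ m+1 ∧ c'.2 = 1) := by
  unfold gstep
  constructor
  · rintro (⟨h, _⟩ | ⟨_, h⟩ | ⟨h, _⟩)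
    · exact absurd h (by decide)
    · exact h
    · exact absurd h (by decide)
  · intro h; exact Or.inr (Or.inl ⟨rfl, h⟩)

lemma gstep_chain_iff (m k j : ℕ) (hk : 1 ≤ k) (hj : 1 ≤ j) (c' : ℕ × ℕ) :
    gstep m (k, j) c' ↔ (k ≤ m+1 ∧ j < 2*k ∧ c' = (k, j+1)) := by
  unfold gstep
  constructor
  · rintro (⟨h, _⟩ | ⟨h, _⟩ | ⟨_, h2, _, h4, h5⟩)
    · rw [Prod.mk.injEq] at h; omega
    · rw [Prod.mk.injEq] at h; omega
    · exact ⟨h2, h4, h5⟩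
  · rintro ⟨h1, h2, h3⟩
    exact Or.inr (Or.inr ⟨hk, h1, hj, h2, h3⟩)

/-- the gadget frame over a 1-frame. -/
def gFrame (F1 : Frame 1) (m : ℕ) : Frame 1 where
  W := F1.W × ℕ × ℕ
  nonempty := ⟨(F1.nonempty.some, 0, 0)⟩
  R := fun _ a b =>
    (a.2 = (0,0) ∧ b.2 = (0,0) ∧ F1.R 0 a.1 b.1) ∨ (b.1 = a.1 ∧ gstep m a.2 b.2)

/-- the family of frames: gadget in the first coordinate, unchanged elsewhere. -/
def gFs (m : ℕ) (Fs : Fin (n+1) → Frame 1) : Fin (n+1) → Frame 1 :=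
  Fin.cases (motive := fun _ => Frame 1) (gFrame (Fs 0) m) (fun j => Fs j.succ)

variable (m : ℕ) (Fs : Fin (n+1) → Frame 1)

/-- projection to the original product. -/
def gproj (z : (prodFrame (gFs m Fs)).W) : (prodFrame Fs).W :=
  Fin.cases (motive := fun i => (Fs i).W) (z 0).1 (fun j => z j.succ)

/-- replace the code of the first coordinate. -/
def setc (z : (prodFrame (gFs m Fs)).W) (c : ℕ × ℕ) : (prodFrame (gFs m Fs)).W :=
  Function.update z 0 ((z 0).1, c)

lemma setc_apply_zero (z : (prodFrame (gFs m Fs)).W) (c : ℕ × ℕ) :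
    setc m Fs z c 0 = ((z 0).1, c) := Function.update_self 0 _ z

lemma setc_apply_succ (z : (prodFrame (gFs m Fs)).W) (c : ℕ × ℕ) (j : Fin n) :
    setc m Fs z c j.succ = z j.succ := Function.update_of_ne (Fin.succ_ne_zero j) _ z

lemma gproj_setc (z : (prodFrame (gFs m Fs)).W) (c : ℕ × ℕ) :
    gproj m Fs (setc m Fs z c) = gproj m Fs z := by
  funext i
  refine Fin.cases ?_ (fun j => ?_) i
  · show (setc m Fs z c 0).1 = (z 0).1
    rw [setc_apply_zero]
  · show setc m Fs z c j.succ = z j.succ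
    rw [setc_apply_succ]

lemma setc_setc (z : (prodFrame (gFs m Fs)).W) (c c' : ℕ × ℕ) :
    setc m Fs (setc m Fs z c) c' = setc m Fs z c' := by
  have h : (setc m Fs z c 0).1 = (z 0).1 := by rw [setc_apply_zero]
  show Function.update (setc m Fs z c) 0 ((setc m Fs z c 0).1, c') = _
  rw [h]
  show Function.update (Function.update z 0 ((z 0).1, c)) 0 ((z 0).1, c') = _
  exact Function.update_idem _ _ _

variable (v : ℕ → Set (prodFrame Fs).W)

/-- the marking of the single variable `p` on the gadget product. -/
def pm (z : (prodFrame (gFs m Fs)).W) : Prop :=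
  (z 0).2.2 ≠ 0 ∧ ((z 0).2 = (0,1) ∨ Even (z 0).2.2 ∨
    ((z 0).2.2 = 1 ∧ 1 ≤ (z 0).2.1 ∧ (z 0).2.1 ≤ m ∧ gproj m Fs z ∉ v (z 0).2.1))

/-- the valuation on the gadget product. -/
def gval : ℕ → Set (prodFrame (gFs m Fs)).W := fun q => {z | q = 0 ∧ pm m Fs v z}

lemma sat_pv (z : (prodFrame (gFs m Fs)).W) :
    Sat (prodFrame (gFs m Fs)) (gval m Fs v) z pv ↔ pm m Fs v z := by
  show z ∈ gval m Fs v 0 ↔ _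
  simp [gval]

lemma pm_setc (z : (prodFrame (gFs m Fs)).W) (c : ℕ × ℕ) :
    pm m Fs v (setc m Fs z c) ↔ (c.2 ≠ 0 ∧ (c = (0,1) ∨ Even c.2 ∨
      (c.2 = 1 ∧ 1 ≤ c.1 ∧ c.1 ≤ m ∧ gproj m Fs z ∉ v c.1))) := by
  unfold pm
  rw [setc_apply_zero, gproj_setc]

lemma pm_setc_twin (z : (prodFrame (gFs m Fs)).W) : pm m Fs v (setc m Fs z (0,1)) := by
  rw [pm_setc]
  exact ⟨by decide, Or.inl rfl⟩

lemma pm_setc_even (z : (prodFrame (gFs m Fs)).W) (k i : ℕ) (hi : 1 ≤ i) :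
    pm m Fs v (setc m Fs z (k, 2*i)) := by
  rw [pm_setc]
  refine ⟨?_, Or.inr (Or.inl ⟨i, by ring⟩)⟩
  show 2*i ≠ 0
  omega

lemma not_pm_setc_odd (z : (prodFrame (gFs m Fs)).W) (k i : ℕ) (hi : 1 ≤ i) :
    ¬ pm m Fs v (setc m Fs z (k, 2*i+1)) := by
  rw [pm_setc]
  rintro ⟨-, h | h | ⟨h, -⟩⟩
  · have h2 := congrArg Prod.snd h
    simp only at h2
    omega
  · rcases h with ⟨r, hr⟩
    simp only at hr
    omega
  · simp only at h
    omega

lemma pm_setc_one (z : (prodFrame (gFs m Fs)).W) (k : ℕ) (hk : 1 ≤ k) :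
    pm m Fs v (setc m Fs z (k, 1)) ↔ (k ≤ m ∧ gproj m Fs z ∉ v k) := by
  rw [pm_setc]
  constructor
  · rintro ⟨-, h | h | h⟩
    · have h2 := congrArg Prod.fst h
      simp only at h2
      omega
    · exact absurd h (by decide : ¬ Even 1)
    · exact ⟨h.2.2.1, h.2.2.2⟩
  · rintro ⟨h1, h2⟩
    exact ⟨(by decide : (1:ℕ) ≠ 0), Or.inr (Or.inr ⟨rfl, hk, h1, h2⟩)⟩

lemma gcoords_iff (z z' : (prodFrame (gFs m Fs)).W) :
    (∀ k, k ≠ (0 : Fin (n+1)) → z k = z' k) ↔ (∀ j : Fin n, z j.succ = z' j.succ) := by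
  constructor
  · intro h j; exact h j.succ (Fin.succ_ne_zero j)
  · intro h k hk
    obtain ⟨j, rfl⟩ := Fin.eq_succ_of_ne_zero hk
    exact h j

/-- characterization of first-coordinate successors in the gadget product. -/
lemma gsucc_iff (z z' : (prodFrame (gFs m Fs)).W) :
    (prodFrame (gFs m Fs)).R 0 z z' ↔
      (((z 0).2 = (0,0) ∧ (z' 0).2 = (0,0) ∧ (Fs 0).R 0 (z 0).1 (z' 0).1 ∧
         ∀ j : Fin n, z j.succ = z' j.succ) ∨
       (∃ c', gstep m (z 0).2 c' ∧ z' = setc m Fs z c')) := by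
  show ((gFs m Fs 0).R 0 (z 0) (z' 0) ∧ ∀ k, k ≠ 0 → z k = z' k) ↔ _
  rw [gcoords_iff]
  show (((z 0).2 = (0,0) ∧ (z' 0).2 = (0,0) ∧ (Fs 0).R 0 (z 0).1 (z' 0).1) ∨
      ((z' 0).1 = (z 0).1 ∧ gstep m (z 0).2 (z' 0).2)) ∧ _ ↔ _
  constructor
  · rintro ⟨h1 | ⟨he, hg⟩, h2⟩
    · exact Or.inl ⟨h1.1, h1.2.1, h1.2.2, h2⟩
    · refine Or.inr ⟨(z' 0).2, hg, funext fun i => ?_⟩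
      refine Fin.cases ?_ (fun j => ?_) i
      · rw [setc_apply_zero]
        exact Prod.ext he rfl
      · rw [setc_apply_succ]
        exact (h2 j).symm
  · rintro (⟨h1, h2, h3, h4⟩ | ⟨c', hg, rfl⟩)
    · exact ⟨Or.inl ⟨h1, h2, h3⟩, h4⟩
    · refine ⟨Or.inr ?_, fun j => (setc_apply_succ m Fs z c' j).symm⟩
      rw [setc_apply_zero]
      exact ⟨rfl, hg⟩

end ModalProducts
namespace ModalProducts
open MF

variable {n : ℕ} (m : ℕ) (Fs : Fin (n+1) → Frame 1) (v : ℕ → Set (prodFrame Fs).W)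

lemma sat_box0_pv (z : (prodFrame (gFs m Fs)).W) :
    Sat (prodFrame (gFs m Fs)) (gval m Fs v) z (MF.box 0 pv) ↔
      ∀ y, (prodFrame (gFs m Fs)).R 0 z y → pm m Fs v y := by
  show (∀ y, _ → Sat _ _ y pv) ↔ _
  exact forall_congr' fun y => imp_congr_right fun _ => sat_pv m Fs v y

lemma sat_blackDia (z : (prodFrame (gFs m Fs)).W) (ψ : MF (n+1)) :
    Sat (prodFrame (gFs m Fs)) (gval m Fs v) z (blackDia ψ) ↔
      ∃ y, (prodFrame (gFs m Fs)).R 0 z y ∧ ¬ pm m Fs v y ∧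
        ∃ y', (prodFrame (gFs m Fs)).R 0 y y' ∧ pm m Fs v y' ∧
          Sat (prodFrame (gFs m Fs)) (gval m Fs v) y' ψ := by
  rw [blackDia, sat_dia]
  refine exists_congr fun y => and_congr_right fun _ => ?_
  show Sat _ _ y (MF.neg pv) ∧ Sat _ _ y (MF.dia 0 (MF.and pv ψ)) ↔ _
  rw [sat_neg, sat_pv, sat_dia]
  refine and_congr_right fun _ => exists_congr fun y' => and_congr_right fun _ => ?_
  show Sat _ _ y' pv ∧ _ ↔ _
  rw [sat_pv]

lemma sat_betaF_iff (z : (prodFrame (gFs m Fs)).W) (t : ℕ) :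
    Sat (prodFrame (gFs m Fs)) (gval m Fs v) z (betaF t) ↔
      ¬ pm m Fs v z ∧ ∃ y, (prodFrame (gFs m Fs)).R 0 z y ∧ pm m Fs v y ∧
        Sat (prodFrame (gFs m Fs)) (gval m Fs v) y (alphaF t) := by
  show Sat _ _ z (MF.neg pv) ∧ Sat _ _ z (MF.dia 0 (MF.and pv (alphaF t))) ↔ _
  rw [sat_neg, sat_pv, sat_dia]
  refine and_congr_right fun _ => exists_congr fun y => and_congr_right fun _ => ?_
  show Sat _ _ y pv ∧ _ ↔ _
  rw [sat_pv]

/-- a chain-point successor step, packaged. -/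
lemma gsucc_chain (z : (prodFrame (gFs m Fs)).W) (k j : ℕ) (hk : 1 ≤ k) (hkm : k ≤ m+1)
    (hj : 1 ≤ j) (hj2 : j < 2*k) :
    (prodFrame (gFs m Fs)).R 0 (setc m Fs z (k, j)) (setc m Fs z (k, j+1)) := by
  rw [gsucc_iff]
  refine Or.inr ⟨(k, j+1), ?_, (setc_setc m Fs z _ _).symm⟩
  rw [setc_apply_zero, gstep_chain_iff m k j hk hj]
  exact ⟨hkm, hj2, rfl⟩

/-- successors of a chain point are unique. -/
lemma gsucc_chain_elim (z : (prodFrame (gFs m Fs)).W) (k j : ℕ) (hk : 1 ≤ k) (hj : 1 ≤ j)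
    (y : (prodFrame (gFs m Fs)).W)
    (hy : (prodFrame (gFs m Fs)).R 0 (setc m Fs z (k, j)) y) :
    j < 2*k ∧ y = setc m Fs z (k, j+1) := by
  rw [gsucc_iff] at hy
  rcases hy with ⟨h1, -⟩ | ⟨c', hg, rfl⟩
  · rw [setc_apply_zero] at h1
    have := congrArg Prod.fst h1
    simp only at this
    omega
  · rw [setc_apply_zero] at hg
    rw [gstep_chain_iff m k j hk hj] at hg
    obtain ⟨-, hlt, rfl⟩ := hg
    exact ⟨hlt, setc_setc m Fs z _ _⟩

/-- truth of `alphaF t` at even chain points. -/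
lemma sat_alphaF_even : ∀ (t k i : ℕ) (z : (prodFrame (gFs m Fs)).W),
    1 ≤ k → k ≤ m+1 → 1 ≤ i → i ≤ k →
    (Sat (prodFrame (gFs m Fs)) (gval m Fs v) (setc m Fs z (k, 2*i)) (alphaF t) ↔ k = i + t) := by
  intro t
  induction t with
  | zero =>
    intro k i z hk hkm hi hik
    rw [alphaF, Function.iterate_zero, id_eq, sat_box0_pv]
    constructor
    · intro h
      by_contra hne
      have h1 := h _ (gsucc_chain m Fs z k (2*i) hk hkm (by omega) (by omega))
      have h2 : (2*i+1 : ℕ) = 2*i+1 := rfl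
      exact not_pm_setc_odd m Fs v z k i hi h1
    · intro h y hy
      obtain ⟨hlt, rfl⟩ := gsucc_chain_elim m Fs z k (2*i) hk (by omega) y hy
      omega
  | succ t ih =>
    intro k i z hk hkm hi hik
    rw [alphaF_succ, sat_blackDia]
    constructor
    · rintro ⟨y, hy, hnp, y', hy', hp', hα⟩
      obtain ⟨hlt, rfl⟩ := gsucc_chain_elim m Fs z k (2*i) hk (by omega) y hy
      obtain ⟨hlt', rfl⟩ := gsucc_chain_elim m Fs z k (2*i+1) hk (by omega) y' hy'
      have h2 : (2*i+1+1 : ℕ) = 2*(i+1) := by ring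
      rw [h2] at hα
      have := (ih k (i+1) z hk hkm (by omega) (by omega)).mp hα
      omega
    · intro h
      refine ⟨setc m Fs z (k, 2*i+1),
        gsucc_chain m Fs z k (2*i) hk hkm (by omega) (by omega),
        not_pm_setc_odd m Fs v z k i hi, setc m Fs z (k, 2*i+1+1),
        gsucc_chain m Fs z k (2*i+1) hk hkm (by omega) (by omega), ?_, ?_⟩
      · have h2 : (2*i+1+1 : ℕ) = 2*(i+1) := by ring
        rw [h2]
        exact pm_setc_even m Fs v z k (i+1) (by omega)
      · have h2 : (2*i+1+1 : ℕ) = 2*(i+1) := by ring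
        rw [h2, (ih k (i+1) z hk hkm (by omega) (by omega))]
        omega
end ModalProducts
namespace ModalProducts
open MF

variable {n : ℕ} (m : ℕ) (Fs : Fin (n+1) → Frame 1) (v : ℕ → Set (prodFrame Fs).W)

/-- successors of the twin. -/
lemma gsucc_twin_elim (z : (prodFrame (gFs m Fs)).W) (y : (prodFrame (gFs m Fs)).W)
    (hy : (prodFrame (gFs m Fs)).R 0 (setc m Fs z (0,1)) y) :
    ∃ k, 1 ≤ k ∧ k ≤ m+1 ∧ y = setc m Fs z (k, 1) := by
  rw [gsucc_iff] at hy
  rcases hy with ⟨h1, -⟩ | ⟨c', hg, rfl⟩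
  · rw [setc_apply_zero] at h1
    exact absurd h1 (by decide : ¬(((0:ℕ),(1:ℕ)) : ℕ × ℕ) = ((0:ℕ),(0:ℕ)))
  · rw [setc_apply_zero, gstep_twin_iff] at hg
    refine ⟨c'.1, hg.1, hg.2.1, ?_⟩
    have hc : c' = (c'.1, 1) := Prod.ext rfl hg.2.2
    rw [setc_setc, ← hc]

lemma gsucc_twin_intro (z : (prodFrame (gFs m Fs)).W) (k : ℕ) (hk : 1 ≤ k) (hkm : k ≤ m+1) :
    (prodFrame (gFs m Fs)).R 0 (setc m Fs z (0,1)) (setc m Fs z (k, 1)) := by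
  rw [gsucc_iff]
  refine Or.inr ⟨(k, 1), ?_, (setc_setc m Fs z _ _).symm⟩
  rw [setc_apply_zero, gstep_twin_iff]
  exact ⟨hk, hkm, rfl⟩

/-- truth of `alphaF (t+1)` at the twin. -/
lemma sat_alphaF_twin (z : (prodFrame (gFs m Fs)).W) (t : ℕ) :
    Sat (prodFrame (gFs m Fs)) (gval m Fs v) (setc m Fs z (0,1)) (alphaF (t+1)) ↔
      (t+1 ≤ m+1 ∧ (t+1 ≤ m → gproj m Fs z ∈ v (t+1))) := by
  rw [alphaF_succ, sat_blackDia]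
  constructor
  · rintro ⟨y, hy, hnp, y', hy', hp', hα⟩
    obtain ⟨k, hk, hkm, rfl⟩ := gsucc_twin_elim m Fs z y hy
    obtain ⟨-, rfl⟩ := gsucc_chain_elim m Fs z k 1 hk le_rfl y' hy'
    have h2 : (1+1 : ℕ) = 2*1 := rfl
    rw [h2] at hα
    have hkt : k = 1 + t := (sat_alphaF_even m Fs v t k 1 z hk hkm le_rfl hk).mp hα
    rw [pm_setc_one m Fs v z k hk] at hnp
    constructor
    · omega
    · intro hle
      by_contra hmem
      have hk1 : k = t + 1 := by omega
      rw [hk1] at hnp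
      exact hnp ⟨hle, hmem⟩
  · rintro ⟨h1, h2⟩
    refine ⟨setc m Fs z (t+1, 1), gsucc_twin_intro m Fs z (t+1) (by omega) h1, ?_,
      setc m Fs z (t+1, 1+1), gsucc_chain m Fs z (t+1) 1 (by omega) h1 le_rfl (by omega), ?_, ?_⟩
    · rw [pm_setc_one m Fs v z (t+1) (by omega)]
      rintro ⟨hle, hmem⟩
      exact hmem (h2 hle)
    · have he : (1+1 : ℕ) = 2*1 := rfl
      rw [he]
      exact pm_setc_even m Fs v z (t+1) 1 le_rfl
    · have he : (1+1 : ℕ) = 2*1 := rfl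
      rw [he, sat_alphaF_even m Fs v t (t+1) 1 z (by omega) h1 le_rfl (by omega)]
      omega

lemma not_pm_orig (z : (prodFrame (gFs m Fs)).W) (hz : (z 0).2 = (0,0)) :
    ¬ pm m Fs v z := by
  rintro ⟨h, -⟩
  rw [hz] at h
  exact h rfl

/-- successors of an original point, for the `beta` computation. -/
lemma gsucc_orig_elim (z : (prodFrame (gFs m Fs)).W) (hz : (z 0).2 = (0,0))
    (y : (prodFrame (gFs m Fs)).W)
    (hy : (prodFrame (gFs m Fs)).R 0 z y) :
    (y 0).2 = (0,0) ∨ y = setc m Fs z (0,1) := by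
  rw [gsucc_iff] at hy
  rcases hy with ⟨-, h, -⟩ | ⟨c', hg, rfl⟩
  · exact Or.inl h
  · rw [hz, gstep_orig_iff] at hg
    rw [hg]
    exact Or.inr rfl

lemma gsucc_orig_twin (z : (prodFrame (gFs m Fs)).W) (hz : (z 0).2 = (0,0)) :
    (prodFrame (gFs m Fs)).R 0 z (setc m Fs z (0,1)) := by
  rw [gsucc_iff]
  refine Or.inr ⟨(0,1), ?_, rfl⟩
  rw [hz, gstep_orig_iff]

/-- truth of `betaF (t+1)` at original points. -/
lemma sat_betaF_orig (z : (prodFrame (gFs m Fs)).W) (hz : (z 0).2 = (0,0)) (t : ℕ) :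
    Sat (prodFrame (gFs m Fs)) (gval m Fs v) z (betaF (t+1)) ↔
      (t+1 ≤ m+1 ∧ (t+1 ≤ m → gproj m Fs z ∈ v (t+1))) := by
  rw [sat_betaF_iff]
  constructor
  · rintro ⟨-, y, hy, hp, hα⟩
    rcases gsucc_orig_elim m Fs z hz y hy with h | rfl
    · exact absurd hp (not_pm_orig m Fs v y h)
    · exact (sat_alphaF_twin m Fs v z t).mp hα
  · intro h
    exact ⟨not_pm_orig m Fs v z hz, setc m Fs z (0,1), gsucc_orig_twin m Fs z hz,
      pm_setc_twin m Fs v z, (sat_alphaF_twin m Fs v z t).mpr h⟩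

/-- `B` holds exactly at points whose first coordinate is an original point. -/
lemma sat_Bf_iff (z : (prodFrame (gFs m Fs)).W) :
    Sat (prodFrame (gFs m Fs)) (gval m Fs v) z (Bf m) ↔ (z 0).2 = (0,0) := by
  constructor
  · intro h
    rw [Bf, sat_betaF_iff] at h
    obtain ⟨hnp, y, hy, hp, hα⟩ := h
    by_contra hne
    rw [gsucc_iff] at hy
    rcases hy with ⟨h1, -⟩ | ⟨c', hg, rfl⟩
    · exact hne h1
    · rcases hg with ⟨hc, rfl⟩ | ⟨hc, h1, h2, h3⟩ | ⟨h1, h2, h3, h4, h5⟩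
      · exact hne hc
      · -- from the twin: but then `pm z` holds, contradiction
        refine hnp ⟨?_, Or.inl hc⟩
        simp [hc]
      · -- chain step
        rcases Nat.even_or_odd ((z 0).2.2 + 1) with ⟨i, hi⟩ | ⟨i, hi⟩
        · -- even position: `alphaF (m+1)` fails there
          have hc' : c' = ((z 0).2.1, 2*i) := by
            rw [h5]; exact Prod.ext rfl (by omega)
          rw [hc'] at hα
          have := (sat_alphaF_even m Fs v (m+1) (z 0).2.1 i z h1 h2 (by omega) (by omega)).mp hα
          omega
        · -- odd position `2i+1 ≥ 3`: not marked, contradiction with `pm`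
          have hc' : c' = ((z 0).2.1, 2*i+1) := by
            rw [h5]; exact Prod.ext rfl (by omega)
          rw [hc'] at hp
          exact not_pm_setc_odd m Fs v z (z 0).2.1 i (by omega) hp
  · intro h
    rw [Bf]
    rw [sat_betaF_orig m Fs v z h m]
    exact ⟨le_rfl, fun hle => absurd hle (by omega)⟩
end ModalProducts
namespace ModalProducts
open MF

variable {n : ℕ} (m : ℕ) (Fs : Fin (n+1) → Frame 1) (v : ℕ → Set (prodFrame Fs).W)

/-- correctness of the translation on the gadget product. -/
lemma gadget_correct (ψ : MF (n+1)) (hv : ∀ q ∈ ψ.vars, 1 ≤ q ∧ q ≤ m) :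
    ∀ z : (prodFrame (gFs m Fs)).W, (z 0).2 = (0,0) →
      (Sat (prodFrame (gFs m Fs)) (gval m Fs v) z (sigmaT m ψ) ↔
        Sat (prodFrame Fs) v (gproj m Fs z) ψ) := by
  induction ψ with
  | var q =>
    intro z hz
    obtain ⟨h1, h2⟩ := hv q (by simp [MF.vars])
    obtain ⟨t, rfl⟩ : ∃ t, q = t+1 := ⟨q-1, by omega⟩
    show Sat _ _ z (betaF (t+1)) ↔ _
    rw [sat_betaF_orig m Fs v z hz t]
    show _ ↔ gproj m Fs z ∈ v (t+1)
    constructor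
    · rintro ⟨-, h⟩; exact h (by omega)
    · intro h; exact ⟨by omega, fun _ => h⟩
  | bot => intro z hz; exact Iff.rfl
  | and φ ψ ihφ ihψ =>
    intro z hz
    exact and_congr (ihφ (fun q hq => hv q (Or.inl hq)) z hz)
      (ihψ (fun q hq => hv q (Or.inr hq)) z hz)
  | or φ ψ ihφ ihψ =>
    intro z hz
    exact or_congr (ihφ (fun q hq => hv q (Or.inl hq)) z hz)
      (ihψ (fun q hq => hv q (Or.inr hq)) z hz)
  | imp φ ψ ihφ ihψ =>
    intro z hz
    exact imp_congr (ihφ (fun q hq => hv q (Or.inl hq)) z hz)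
      (ihψ (fun q hq => hv q (Or.inr hq)) z hz)
  | box i φ ih =>
    intro z hz
    induction i using Fin.cases with
    | zero =>
      show (∀ y, _ → Sat _ _ y (MF.imp (Bf m) (sigmaT m φ))) ↔ (∀ x', _ → Sat _ _ x' φ)
      constructor
      · intro H x' hx'
        set y : (prodFrame (gFs m Fs)).W :=
          Function.update z 0 (x' 0, ((0:ℕ),(0:ℕ))) with hy
        have hy0 : y 0 = (x' 0, ((0:ℕ),(0:ℕ))) := Function.update_self 0 _ z
        have hys : ∀ j : Fin n, y j.succ = z j.succ :=
          fun j => Function.update_of_ne (Fin.succ_ne_zero j) _ z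
        have hrel : (prodFrame (gFs m Fs)).R 0 z y := by
          rw [gsucc_iff]
          refine Or.inl ⟨hz, by rw [hy0], ?_, fun j => (hys j).symm⟩
          rw [hy0]
          exact hx'.1
        have hB : Sat (prodFrame (gFs m Fs)) (gval m Fs v) y (Bf m) :=
          (sat_Bf_iff m Fs v y).mpr (by rw [hy0])
        have hσ := H y hrel hB
        have hcode : (y 0).2 = (0,0) := by rw [hy0]
        have := (ih hv y hcode).mp hσ
        have hproj : gproj m Fs y = x' := by
          funext i
          refine Fin.cases ?_ (fun j => ?_) i
          · show (y 0).1 = x' 0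
            rw [hy0]
          · show y j.succ = x' j.succ
            rw [hys j]
            exact hx'.2 j.succ (Fin.succ_ne_zero j)
        rwa [hproj] at this
      · intro H y hy hB
        rw [sat_Bf_iff] at hB
        rw [gsucc_iff] at hy
        rcases hy with ⟨-, -, hr, hco⟩ | ⟨c', hg, rfl⟩
        · have hcode : (y 0).2 = (0,0) := hB
          refine (ih hv y hcode).mpr (H (gproj m Fs y) ⟨hr, ?_⟩)
          intro k hk
          obtain ⟨j, rfl⟩ := Fin.eq_succ_of_ne_zero hk
          show z j.succ = y j.succ
          exact hco j
        · rw [hz, gstep_orig_iff] at hg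
          rw [setc_apply_zero, hg] at hB
          exact absurd hB (by decide : ¬(((0:ℕ),(1:ℕ)) : ℕ × ℕ) = ((0:ℕ),(0:ℕ)))
    | succ j =>
      show (∀ y, _ → Sat _ _ y (MF.imp (Bf m) (sigmaT m φ))) ↔ (∀ x', _ → Sat _ _ x' φ)
      constructor
      · intro H x' hx'
        set y : (prodFrame (gFs m Fs)).W := Function.update z j.succ (x' j.succ) with hy
        have hyj : y j.succ = x' j.succ := Function.update_self j.succ _ z
        have hyo : ∀ k, k ≠ j.succ → y k = z k :=
          fun k hk => Function.update_of_ne hk _ z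
        have hrel : (prodFrame (gFs m Fs)).R j.succ z y := by
          refine ⟨?_, fun k hk => (hyo k hk).symm⟩
          rw [hyj]
          exact hx'.1
        have hcode : (y 0).2 = (0,0) := by
          rw [hyo 0 (Fin.succ_ne_zero j).symm]
          exact hz
        have hB : Sat (prodFrame (gFs m Fs)) (gval m Fs v) y (Bf m) :=
          (sat_Bf_iff m Fs v y).mpr hcode
        have := (ih hv y hcode).mp (H y hrel hB)
        have hproj : gproj m Fs y = x' := by
          funext i
          refine Fin.cases ?_ (fun l => ?_) i
          · show (y 0).1 = x' 0
            rw [hyo 0 (Fin.succ_ne_zero j).symm]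
            exact hx'.2 0 (Fin.succ_ne_zero j).symm
          · show y l.succ = x' l.succ
            by_cases hlj : l = j
            · subst hlj
              exact hyj
            · rw [hyo l.succ (by simpa [Fin.succ_inj] using hlj)]
              exact hx'.2 l.succ (by simpa [Fin.succ_inj] using hlj)
        rwa [hproj] at this
      · intro H y hy hB
        have hcode : (y 0).2 = (0,0) := by
          rw [← hy.2 0 (Fin.succ_ne_zero j).symm]
          exact hz
        refine (ih hv y hcode).mpr (H (gproj m Fs y) ⟨hy.1, ?_⟩)
        intro k hk
        refine Fin.cases (motive := fun k => k ≠ j.succ → gproj m Fs z k = gproj m Fs y k)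
          ?_ (fun l => ?_) k hk
        · intro _
          show (z 0).1 = (y 0).1
          rw [hy.2 0 (Fin.succ_ne_zero j).symm]
        · intro hl
          show z l.succ = y l.succ
          exact hy.2 l.succ hl
end ModalProducts
namespace ModalProducts
open MF

variable {n : ℕ}

lemma dir1 (Ls : Fin n → Set (MF 1)) (m : ℕ) (φ : MF (n+1))
    (hv : ∀ q ∈ φ.vars, 1 ≤ q ∧ q ≤ m)
    (h : MF.imp (Af m φ) (sigmaT m φ) ∈
      productLogic (Fin.cases (motive := fun _ => Set (MF 1)) logicK Ls)) :
    φ ∈ productLogic (Fin.cases (motive := fun _ => Set (MF 1)) logicK Ls) := by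
  intro F hF
  obtain ⟨Fs, hFs, rfl⟩ := hF
  intro v x
  have hmem : prodFrame (gFs m Fs) ∈ {F | ∃ Fs', (∀ i, ValidSet (Fs' i)
      (Fin.cases (motive := fun _ => Set (MF 1)) logicK Ls i)) ∧ F = prodFrame Fs'} := by
    refine ⟨gFs m Fs, fun i => ?_, rfl⟩
    induction i using Fin.cases with
    | zero =>
      intro ψ hψ
      exact hψ (gFs m Fs 0) (Set.mem_univ _)
    | succ j => exact hFs j.succ
  set z₀ : (prodFrame (gFs m Fs)).W :=
    Fin.cases (motive := fun i => (gFs m Fs i).W) ((x 0), ((0:ℕ),(0:ℕ)))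
      (fun j => x j.succ) with hz₀
  have hsat := h _ hmem (gval m Fs v) z₀
  have hA : Sat (prodFrame (gFs m Fs)) (gval m Fs v) z₀ (Af m φ) := by
    refine ⟨(sat_Bf_iff m Fs v z₀).mpr rfl, ?_, ?_⟩
    · rw [sat_boxLe]
      intro z hz hB
      rw [sat_Bf_iff] at hB
      rw [sat_boxLeTail]
      intro z' hz'
      rw [sat_Bf_iff]
      rw [treach_fst (gFs m Fs) hz']
      exact hB
    · rw [sat_boxLe]
      intro z hz hd
      rw [sat_diaLeTail] at hd
      obtain ⟨z', hz', hB'⟩ := hd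
      rw [sat_Bf_iff] at hB' ⊢
      rw [← treach_fst (gFs m Fs) hz']
      exact hB'
  have hs := hsat hA
  rw [gadget_correct m Fs v φ hv z₀ rfl] at hs
  have hx : gproj m Fs z₀ = x := funext fun i => Fin.cases rfl (fun j => rfl) i
  rwa [hx] at hs
end ModalProducts
namespace ModalProducts
open MF

lemma ReachLe.append {N} {F : Frame N} {k} {a b c : F.W} (h : ReachLe F k a b)
    (i : Fin N) (hs : F.R i b c) : ReachLe F (k+1) a c := by
  induction k generalizing a with
  | zero => cases h; exact Or.inr ⟨i, c, hs, rfl⟩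
  | succ k ih =>
    rcases h with h | ⟨j, z₁, hst, h⟩
    · exact Or.inl (ih h)
    · exact Or.inr ⟨j, z₁, hst, ih h⟩

/-- reachability within a 1-frame. -/
def Reach0 (F1 : Frame 1) : ℕ → F1.W → F1.W → Prop
  | 0, a, b => b = a
  | k+1, a, b => Reach0 F1 k a b ∨ ∃ c, F1.R 0 a c ∧ Reach0 F1 k c b

variable {n : ℕ} (Fs : Fin (n+1) → Frame 1)

lemma reach0_of_reach : ∀ (k) (a b : (prodFrame Fs).W),
    ReachLe (prodFrame Fs) k a b → Reach0 (Fs 0) k (a 0) (b 0) := by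
  intro k
  induction k with
  | zero => rintro a b rfl; rfl
  | succ k ih =>
    rintro a b (h | ⟨i, z₁, hst, h⟩)
    · exact Or.inl (ih a b h)
    · induction i using Fin.cases with
      | zero => exact Or.inr ⟨z₁ 0, hst.1, ih z₁ b h⟩
      | succ j =>
        have h0 : a 0 = z₁ 0 := hst.2 0 (Fin.succ_ne_zero j).symm
        rw [h0]
        exact Or.inl (ih z₁ b h)

lemma reach_of_reach0 : ∀ (k) (c b0 : (Fs 0).W), Reach0 (Fs 0) k c b0 →
    ∀ w : (prodFrame Fs).W, w 0 = c → ReachLe (prodFrame Fs) k w (Function.update w 0 b0) := by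
  intro k
  induction k with
  | zero =>
    rintro c b0 rfl w rfl
    show Function.update w 0 (w 0) = w
    exact Function.update_eq_self 0 w
  | succ k ih =>
    rintro c b0 (h | ⟨c', hc', h⟩) w hw
    · exact Or.inl (ih c b0 h w hw)
    · refine Or.inr ⟨0, Function.update w 0 c', ⟨?_, fun l hl => (Function.update_of_ne hl _ w).symm⟩, ?_⟩
      · erw [Function.update_self]
        rw [hw]
        exact hc'
      · have := ih c' b0 h (Function.update w 0 c') (Function.update_self 0 c' w)
        have e : Function.update (Function.update w 0 c') 0 b0 = Function.update w 0 b0 :=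
          Function.update_idem _ _ _
        rwa [e] at this
end ModalProducts
namespace ModalProducts
open MF

variable {n : ℕ} (Fs : Fin (n+1) → Frame 1)

lemma treach_base : ∀ (k) (a b : (prodFrame Fs).W), ReachLe (prodFrame Fs) k a b →
    TReachLe (prodFrame Fs) k (Function.update a 0 (b 0)) b := by
  intro k
  induction k with
  | zero =>
    intro a b hab
    have hab' : b = a := hab
    rw [hab']
    show a = Function.update a 0 (a 0)
    exact (Function.update_eq_self 0 a).symm
  | succ k ih =>
    rintro a b (h | ⟨i, z₁, hst, h⟩)
    · exact Or.inl (ih a b h)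
    · induction i using Fin.cases with
      | zero =>
        have heq : Function.update a 0 (b 0) = Function.update z₁ 0 (b 0) := by
          funext l
          refine Fin.cases ?_ (fun j => ?_) l
          · erw [Function.update_self]
          · erw [Function.update_of_ne (Fin.succ_ne_zero j),
              Function.update_of_ne (Fin.succ_ne_zero j)]
            exact hst.2 j.succ (Fin.succ_ne_zero j)
        rw [heq]
        exact Or.inl (ih z₁ b h)
      | succ j =>
        refine Or.inr ⟨j, Function.update z₁ 0 (b 0), ⟨?_, ?_⟩, ih z₁ b h⟩
        · erw [Function.update_of_ne (Fin.succ_ne_zero j),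
            Function.update_of_ne (Fin.succ_ne_zero j)]
          exact hst.1
        · intro l hl
          refine Fin.cases (motive := fun l => l ≠ j.succ →
            Function.update a 0 (b 0) l = Function.update z₁ 0 (b 0) l) ?_ (fun l' => ?_) l hl
          · intro _
            erw [Function.update_self]
          · intro hl'
            erw [Function.update_of_ne (Fin.succ_ne_zero l'),
              Function.update_of_ne (Fin.succ_ne_zero l')]
            exact hst.2 l'.succ hl'

variable (m : ℕ) (u : ℕ → Set (prodFrame Fs).W) (y : (prodFrame Fs).W)

/-- side condition on the new first-coordinate relation. -/
def Cond : ∀ i : Fin (n+1), (Fs i).W → Prop :=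
  Fin.cases (fun b => Sat (prodFrame Fs) u (Function.update y 0 b) (Bf m))
    (fun _ _ => True)

/-- the modified family of frames for the converse direction. -/
def FsP : Fin (n+1) → Frame 1 := fun i =>
  ⟨(Fs i).W, (Fs i).nonempty, fun _ a b => (Fs i).R 0 a b ∧ Cond Fs m u y i b⟩

/-- the one-variable valuation transfers to the original variables. -/
def vP : ℕ → Set (prodFrame (FsP Fs m u y)).W :=
  fun q => {z | Sat (prodFrame Fs) u z (betaF q)}

lemma FsP_succ (j : Fin n) : FsP Fs m u y j.succ = Fs j.succ := by
  show Frame.mk _ _ _ = _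
  have h : (fun (_ : Fin 1) a b => (Fs j.succ).R 0 a b ∧ Cond Fs m u y j.succ b)
      = (Fs j.succ).R := by
    funext o a b
    have : Cond Fs m u y j.succ b = True := rfl
    rw [this, and_true, Subsingleton.elim o 0]
  rw [h]

lemma FsP_R0 (z z' : (prodFrame Fs).W) :
    (prodFrame (FsP Fs m u y)).R 0 z z' ↔
      ((prodFrame Fs).R 0 z z' ∧
        Sat (prodFrame Fs) u (Function.update y 0 (z' 0)) (Bf m)) := by
  show ((Fs 0).R 0 (z 0) (z' 0) ∧ Cond Fs m u y 0 (z' 0)) ∧ (∀ k, k ≠ 0 → z k = z' k) ↔ _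
  have hc : Cond Fs m u y 0 (z' 0) = Sat (prodFrame Fs) u (Function.update y 0 (z' 0)) (Bf m) := rfl
  rw [hc]
  constructor
  · rintro ⟨⟨h1, h2⟩, h3⟩
    exact ⟨⟨h1, h3⟩, h2⟩
  · rintro ⟨⟨h1, h3⟩, h2⟩
    exact ⟨⟨h1, h2⟩, h3⟩

lemma FsP_Rsucc (j : Fin n) (z z' : (prodFrame Fs).W) :
    (prodFrame (FsP Fs m u y)).R j.succ z z' ↔ (prodFrame Fs).R j.succ z z' := by
  show ((Fs j.succ).R 0 (z j.succ) (z' j.succ) ∧ Cond Fs m u y j.succ (z' j.succ)) ∧ _ ↔ _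
  have : Cond Fs m u y j.succ (z' j.succ) = True := rfl
  rw [this, and_true]
  exact Iff.rfl

/-- correctness of the translation for the converse direction. -/
lemma dir2_correct (d : ℕ)
    (hst : ∀ z, ReachLe (prodFrame Fs) d y z →
      (Sat (prodFrame Fs) u z (Bf m) ↔
        Sat (prodFrame Fs) u (Function.update y 0 (z 0)) (Bf m)))
    (htail : ∀ z, ReachLe (prodFrame Fs) d y z → Sat (prodFrame Fs) u z (Bf m) →
      ∀ z', TReachLe (prodFrame Fs) d z z' → Sat (prodFrame Fs) u z' (Bf m))
    (ψ : MF (n+1)) :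
    ∀ (k), k + ψ.md ≤ d → ∀ (z : (prodFrame Fs).W), ReachLe (prodFrame Fs) k y z →
      Sat (prodFrame Fs) u z (Bf m) →
      (Sat (prodFrame Fs) u z (sigmaT m ψ) ↔ Sat (prodFrame (FsP Fs m u y)) (vP Fs m u y) z ψ) := by
  induction ψ with
  | var q => intro k hk z hz hB; exact Iff.rfl
  | bot => intro k hk z hz hB; exact Iff.rfl
  | and φ ψ ihφ ihψ =>
    intro k hk z hz hB
    exact and_congr
      (ihφ k (by simp [MF.md] at hk ⊢; omega) z hz hB)
      (ihψ k (by simp [MF.md] at hk ⊢; omega) z hz hB)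
  | or φ ψ ihφ ihψ =>
    intro k hk z hz hB
    exact or_congr
      (ihφ k (by simp [MF.md] at hk ⊢; omega) z hz hB)
      (ihψ k (by simp [MF.md] at hk ⊢; omega) z hz hB)
  | imp φ ψ ihφ ihψ =>
    intro k hk z hz hB
    exact imp_congr
      (ihφ k (by simp [MF.md] at hk ⊢; omega) z hz hB)
      (ihψ k (by simp [MF.md] at hk ⊢; omega) z hz hB)
  | box i φ ih =>
    intro k hk z hz hB
    have hk' : k + 1 + φ.md ≤ d := by simp [MF.md] at hk; omega
    induction i using Fin.cases with
    | zero =>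
      show (∀ z', _ → Sat _ _ z' (MF.imp (Bf m) (sigmaT m φ))) ↔ (∀ z', _ → Sat _ _ z' φ)
      constructor
      · intro H z' hz'
        replace hz' := (FsP_R0 Fs m u y z z').mp hz'
        obtain ⟨hr, hcond⟩ := hz'
        have hreach : ReachLe (prodFrame Fs) (k+1) y z' := hz.append 0 hr
        have hBz' : Sat (prodFrame Fs) u z' (Bf m) :=
          (hst z' (hreach.mono _ (by omega))).mpr hcond
        exact (ih k.succ hk' z' hreach hBz').mp (H z' hr hBz')
      · intro H z' hr hBz'
        have hreach : ReachLe (prodFrame Fs) (k+1) y z' := hz.append 0 hr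
        refine (ih k.succ hk' z' hreach hBz').mpr (H z' ?_)
        rw [FsP_R0]
        exact ⟨hr, (hst z' (hreach.mono _ (by omega))).mp hBz'⟩
    | succ j =>
      show (∀ z', _ → Sat _ _ z' (MF.imp (Bf m) (sigmaT m φ))) ↔ (∀ z', _ → Sat _ _ z' φ)
      constructor
      · intro H z' hz'
        replace hz' := (FsP_Rsucc Fs m u y j z z').mp hz'
        have hreach : ReachLe (prodFrame Fs) (k+1) y z' := hz.append j.succ hz'
        have hBz' : Sat (prodFrame Fs) u z' (Bf m) :=
          htail z (hz.mono _ (by omega)) hB z'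
            ((TReachLe.refl _ 0 z).append j hz' |>.mono _ (by omega))
        exact (ih k.succ hk' z' hreach hBz').mp (H z' hz' hBz')
      · intro H z' hz' hBz'
        have hreach : ReachLe (prodFrame Fs) (k+1) y z' := hz.append j.succ hz'
        refine (ih k.succ hk' z' hreach hBz').mpr (H z' ?_)
        rw [FsP_Rsucc]
        exact hz'
end ModalProducts
namespace ModalProducts
open MF

variable {n : ℕ}

lemma dir2 (Ls : Fin n → Set (MF 1)) (m : ℕ) (φ : MF (n+1))
    (h : φ ∈ productLogic (Fin.cases (motive := fun _ => Set (MF 1)) logicK Ls)) :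
    MF.imp (Af m φ) (sigmaT m φ) ∈
      productLogic (Fin.cases (motive := fun _ => Set (MF 1)) logicK Ls) := by
  intro F hF
  obtain ⟨Fs, hFs, rfl⟩ := hF
  intro u y hA
  obtain ⟨hB, hA2, hA3⟩ := hA
  have hA2' : ∀ z, ReachLe (prodFrame Fs) φ.md y z → Sat (prodFrame Fs) u z (Bf m) →
      ∀ z', TReachLe (prodFrame Fs) φ.md z z' → Sat (prodFrame Fs) u z' (Bf m) := by
    intro z hz hBz z' hz'
    exact (sat_boxLeTail _ _ _ _ _).1 ((sat_boxLe _ _ _ _ _).1 hA2 z hz hBz) z' hz'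
  have hA3' : ∀ z, ReachLe (prodFrame Fs) φ.md y z →
      (∃ z', TReachLe (prodFrame Fs) φ.md z z' ∧ Sat (prodFrame Fs) u z' (Bf m)) →
      Sat (prodFrame Fs) u z (Bf m) := by
    intro z hz hex
    exact (sat_boxLe _ _ _ _ _).1 hA3 z hz ((sat_diaLeTail _ _ _ _ _).2 hex)
  have hst : ∀ z, ReachLe (prodFrame Fs) φ.md y z →
      (Sat (prodFrame Fs) u z (Bf m) ↔
        Sat (prodFrame Fs) u (Function.update y 0 (z 0)) (Bf m)) := by
    intro z hz
    have h1 : ReachLe (prodFrame Fs) φ.md y (Function.update y 0 (z 0)) :=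
      reach_of_reach0 Fs φ.md (y 0) (z 0) (reach0_of_reach Fs φ.md y z hz) y rfl
    have h2 : TReachLe (prodFrame Fs) φ.md (Function.update y 0 (z 0)) z :=
      treach_base Fs φ.md y z hz
    constructor
    · intro hBz; exact hA3' _ h1 ⟨z, h2, hBz⟩
    · intro hBb; exact hA2' _ h1 hBb z h2
  have hmem : prodFrame (FsP Fs m u y) ∈ {F | ∃ Fs', (∀ i, ValidSet (Fs' i)
      (Fin.cases (motive := fun _ => Set (MF 1)) logicK Ls i)) ∧ F = prodFrame Fs'} := by
    refine ⟨FsP Fs m u y, fun i => ?_, rfl⟩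
    induction i using Fin.cases with
    | zero => intro ψ hψ; exact hψ _ (Set.mem_univ _)
    | succ j =>
      rw [FsP_succ]
      exact hFs j.succ
  have hφ := h _ hmem (vP Fs m u y) y
  exact (dir2_correct Fs m u y φ.md hst hA2' φ 0 (by omega) y (ReachLe.refl _ 0 y) hB).2 hφ

lemma total_len_le (m : ℕ) (φ : MF (n+1)) (hm : m ≤ φ.len) (hσq : ∀ q ∈ φ.vars, q ≤ m) :
    (MF.imp (Af m φ) (sigmaT m φ)).len ≤ (4000*(n+2)^2) ^ φ.len := by
  have hd : φ.md ≤ φ.len := md_le_len φ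
  have hl1 : 1 ≤ φ.len := len_pos φ
  have hσ : (sigmaT m φ).len ≤ (16*m+33) * φ.len := len_sigmaT m φ hσq
  have hD1 : 1 ≤ (n+2)^φ.md := Nat.one_le_pow _ _ (by omega)
  have hE1 : 1 ≤ (n+1)^φ.md := Nat.one_le_pow _ _ (by omega)
  have hED : (n+1)^φ.md ≤ (n+2)^φ.md := Nat.pow_le_pow_left (by omega) _
  -- lengths of the pieces
  have e1 : (boxLeTail φ.md (Bf m) : MF (n+1)).len + 2 = (n+1)^φ.md * (16*m+31) := by
    have h := len_boxLeTail (n := n) φ.md (Bf m)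
    rw [len_Bf, show 16*m+29+2 = 16*m+31 from by omega] at h
    exact h
  have e2 : (boxLe φ.md (MF.imp (Bf m) (boxLeTail φ.md (Bf m))) : MF (n+1)).len + 2
      = (n+2)^φ.md * ((16*m+32) + (boxLeTail φ.md (Bf m) : MF (n+1)).len) := by
    have h := len_boxLe (n := n) φ.md (MF.imp (Bf m) (boxLeTail φ.md (Bf m)))
    simp only [MF.len, len_Bf, len_betaF, len_alphaF] at h
    rw [h]
    congr 1
    omega
  have hnb : (MF.neg (Bf m) : MF (n+1)).len = 16*m+31 := by
    simp only [MF.neg, MF.len, len_Bf, len_alphaF, len_betaF]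
  have e3' : (boxLeTail φ.md (MF.neg (Bf m)) : MF (n+1)).len + 2
      = (n+1)^φ.md * (16*m+33) := by
    have h := len_boxLeTail (n := n) φ.md (MF.neg (Bf m))
    rw [hnb, show 16*m+31+2 = 16*m+33 from by omega] at h
    exact h
  have e3 : (diaLeTail φ.md (Bf m) : MF (n+1)).len = (n+1)^φ.md * (16*m+33) := by
    show (boxLeTail φ.md (MF.neg (Bf m)) : MF (n+1)).len + 1 + 1 = _
    omega
  have e4 : (boxLe φ.md (MF.imp (diaLeTail φ.md (Bf m)) (Bf m)) : MF (n+1)).len + 2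
      = (n+2)^φ.md * ((n+1)^φ.md * (16*m+33) + (16*m+32)) := by
    rw [len_boxLe]
    congr 1
    show (diaLeTail φ.md (Bf m) : MF (n+1)).len + (Bf m).len + 1 + 2 = _
    rw [e3, len_Bf]
    omega
  -- abbreviations
  set D := (n+2)^φ.md with hDdef
  set E := (n+1)^φ.md with hEdef
  set K := D * (E * (16*m+33)) with hKdef
  have k1 : 16*m+32 ≤ E*(16*m+33) := le_trans (by omega) (Nat.le_mul_of_pos_left _ (by omega))
  have k2 : E*(16*m+31) ≤ E*(16*m+33) := Nat.mul_le_mul_left _ (by omega)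
  have kK : 16*m+32 ≤ K := le_trans k1 (Nat.le_mul_of_pos_left _ (by omega))
  have c1 : (boxLe φ.md (MF.imp (Bf m) (boxLeTail φ.md (Bf m))) : MF (n+1)).len ≤ 2*K := by
    have h2 : (16*m+32) + (boxLeTail φ.md (Bf m) : MF (n+1)).len ≤ 2*(E*(16*m+33)) := by
      omega
    calc (boxLe φ.md (MF.imp (Bf m) (boxLeTail φ.md (Bf m))) : MF (n+1)).len
        ≤ D * ((16*m+32) + (boxLeTail φ.md (Bf m) : MF (n+1)).len) := by omega
      _ ≤ D * (2*(E*(16*m+33))) := Nat.mul_le_mul_left _ h2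
      _ = 2*K := by rw [hKdef]; ring
  have c2 : (boxLe φ.md (MF.imp (diaLeTail φ.md (Bf m)) (Bf m)) : MF (n+1)).len ≤ 2*K := by
    have h2 : E*(16*m+33) + (16*m+32) ≤ 2*(E*(16*m+33)) := by omega
    calc (boxLe φ.md (MF.imp (diaLeTail φ.md (Bf m)) (Bf m)) : MF (n+1)).len
        ≤ D * (E*(16*m+33) + (16*m+32)) := by omega
      _ ≤ D * (2*(E*(16*m+33))) := Nat.mul_le_mul_left _ h2
      _ = 2*K := by rw [hKdef]; ring
  have c3 : (sigmaT m φ).len ≤ K * φ.len := by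
    calc (sigmaT m φ).len ≤ (16*m+33) * φ.len := hσ
      _ ≤ K * φ.len := Nat.mul_le_mul_right _ (le_trans (by omega)
          (le_trans (Nat.le_mul_of_pos_left _ (by omega)) (Nat.le_mul_of_pos_left _ (by omega))))
  have kl : K ≤ K * φ.len := Nat.le_mul_of_pos_right _ (by omega)
  have htot : (MF.imp (Af m φ) (sigmaT m φ)).len =
      (boxLe φ.md (MF.imp (Bf m) (boxLeTail φ.md (Bf m))) : MF (n+1)).len +
      (boxLe φ.md (MF.imp (diaLeTail φ.md (Bf m)) (Bf m)) : MF (n+1)).len +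
      (sigmaT m φ).len + (16*m+32) := by
    show (Af m φ).len + (sigmaT m φ).len + 1 = _
    rw [Af]
    show (Bf m).len +
      ((boxLe φ.md (MF.imp (Bf m) (boxLeTail φ.md (Bf m))) : MF (n+1)).len +
       (boxLe φ.md (MF.imp (diaLeTail φ.md (Bf m)) (Bf m)) : MF (n+1)).len + 1) + 1
      + (sigmaT m φ).len + 1 = _
    rw [len_Bf]
    omega
  rw [htot]
  have b1 : φ.len ≤ 2^φ.len := Nat.lt_two_pow_self.le
  have b2 : D ≤ (n+2)^φ.len := Nat.pow_le_pow_right (by omega) hd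
  have b3 : E ≤ (n+2)^φ.len := hED.trans b2
  have b4 : 16*m+33 ≤ 49*2^φ.len :=
    le_trans (by omega) (Nat.mul_le_mul_left _ b1)
  calc (boxLe φ.md (MF.imp (Bf m) (boxLeTail φ.md (Bf m))) : MF (n+1)).len +
      (boxLe φ.md (MF.imp (diaLeTail φ.md (Bf m)) (Bf m)) : MF (n+1)).len +
      (sigmaT m φ).len + (16*m+32)
      ≤ (6*φ.len) * K := by
        have : 6*(K*φ.len) = (6*φ.len)*K := by ring
        omega
    _ = (6*φ.len) * (D * (E * (16*m+33))) := by rw [hKdef]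
    _ ≤ (6*(2^φ.len)) * ((n+2)^φ.len * ((n+2)^φ.len * (49*2^φ.len))) :=
        Nat.mul_le_mul (Nat.mul_le_mul_left 6 b1)
          (Nat.mul_le_mul b2 (Nat.mul_le_mul b3 b4))
    _ = 294 * ((4:ℕ)^φ.len * ((n+2)^2)^φ.len) := by
        have p1 : (4:ℕ)^φ.len = 2^φ.len * 2^φ.len := by
          rw [show (4:ℕ) = 2*2 from rfl, mul_pow]
        have p2 : ((n+2)^2 : ℕ)^φ.len = (n+2)^φ.len * (n+2)^φ.len := by
          rw [pow_two, mul_pow]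
        rw [p1, p2]
        ring
    _ ≤ 1000^φ.len * ((4:ℕ)^φ.len * ((n+2)^2)^φ.len) :=
        Nat.mul_le_mul_right _ (le_trans (by omega) (Nat.le_self_pow (by omega) 1000))
    _ = (4000*(n+2)^2) ^ φ.len := by
        rw [show (4000:ℕ)*(n+2)^2 = 1000*(4*(n+2)^2) from by ring, mul_pow, mul_pow]
end ModalProducts
/-- **Remark (Section 4): the analogue of Theorem 3.3 with `K` in place of `T`.**
Let `n ≥ 1`, let `L₂, …, Lₙ` be Kripke complete monomodal logics, and let
`L = K × L₂ × … × Lₙ`.  For an `(n+1)`-modal formula `φ` whose variables are among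
`p₁, …, p_m`, with `A` and `σ` defined from `φ`: `φ ∈ L` iff `A → σ(φ) ∈ L`;
consequently `L` is exponentially embeddable into its one-variable fragment. -/
theorem products_with_K_embedding (n : ℕ) (Ls : Fin n → Set (MF 1))
    (hLs : ∀ i, KripkeComplete (Ls i))
    (L : Set (MF (n+1)))
    (hL : L = productLogic (Fin.cases (motive := fun _ => Set (MF 1)) logicK Ls)) :
    (∀ (m : ℕ) (φ : MF (n+1)), (∀ q ∈ φ.vars, 1 ≤ q ∧ q ≤ m) →
      (φ ∈ L ↔ MF.imp (Af m φ) (sigmaT m φ) ∈ L)) ∧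
    (∃ c : ℕ, ∀ φ : MF (n+1), (∀ q ∈ φ.vars, 1 ≤ q) →
      (MF.imp (Af φ.maxVar φ) (sigmaT φ.maxVar φ)).vars ⊆ {0} ∧
      (φ ∈ L ↔ MF.imp (Af φ.maxVar φ) (sigmaT φ.maxVar φ) ∈ L) ∧
      (MF.imp (Af φ.maxVar φ) (sigmaT φ.maxVar φ)).len ≤ c ^ φ.len) := by
  subst hL
  constructor
  · intro m φ hv
    exact ⟨fun h => dir2 Ls m φ h, fun h => dir1 Ls m φ hv h⟩
  · refine ⟨4000*(n+2)^2, fun φ hv => ⟨?_, ?_, ?_⟩⟩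
    · exact Set.union_subset (vars_Af _ _) (vars_sigmaT _ _)
    · exact ⟨fun h => dir2 Ls _ φ h,
        fun h => dir1 Ls _ φ (fun q hq => ⟨hv q hq, mem_vars_le_maxVar hq⟩) h⟩
    · exact total_len_le _ φ (le_trans (maxVar_le_len φ) (le_refl _))
        (fun q hq => mem_vars_le_maxVar hq)
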